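/- arXiv:2509.15769 — 2 statements merged into one kernel-verified Lean document; each statement's English description precedes it below -/
import Mathlib

section
/- For every real r > 2 and every positive integer n, there exists θ₂ ∈ [−1, 1] such that (1/n) ∑_{k=n}^∞ 1/k^{r-1} − ∑_{k=n}^∞ 1/k^r = (1/n^r) · ( n/((r-1)(r-2)) + θ₂ ). -/
open Real Set Filter

lemma mvt_bound (s : ℝ) (hs : 1 < s) (x : ℝ) (hx : 0 < x) :
    (s - 1) * (x + 1) ^ (-s) ≤ x ^ (1 - s) - (x + 1) ^ (1 - s) ∧
      x ^ (1 - s) - (x + 1) ^ (1 - s) ≤ (s - 1) * x ^ (-s) := by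
  have hcont : ContinuousOn (fun t : ℝ => t ^ (1 - s)) (Icc x (x + 1)) :=
    continuousOn_id.rpow_const fun t ht => Or.inl (ne_of_gt (lt_of_lt_of_le hx ht.1))
  have hderiv : ∀ t ∈ Ioo x (x + 1),
      HasDerivAt (fun t : ℝ => t ^ (1 - s)) ((1 - s) * t ^ (-s)) t := by
    intro t ht
    have := Real.hasDerivAt_rpow_const (x := t) (p := 1 - s)
      (Or.inl (ne_of_gt (hx.trans ht.1)))
    simpa [show (1 : ℝ) - s - 1 = -s by ring] using this
  obtain ⟨c, hc, hceq⟩ := exists_hasDerivAt_eq_slope (fun t : ℝ => t ^ (1 - s))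
    (fun t => (1 - s) * t ^ (-s)) (lt_add_one x) hcont hderiv
  have hkey : x ^ (1 - s) - (x + 1) ^ (1 - s) = (s - 1) * c ^ (-s) := by
    have h1 : (x + 1) - x = 1 := by ring
    rw [h1, div_one] at hceq
    nlinarith [hceq]
  constructor
  · rw [hkey]
    have : (x + 1) ^ (-s) ≤ c ^ (-s) :=
      Real.rpow_le_rpow_of_nonpos (hx.trans hc.1) hc.2.le (by linarith)
    nlinarith
  · rw [hkey]
    have : c ^ (-s) ≤ x ^ (-s) :=
      Real.rpow_le_rpow_of_nonpos hx hc.1.le (by linarith)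
    nlinarith

lemma summable_shift (s : ℝ) (hs : 1 < s) (N : ℝ) (hN : 1 ≤ N) :
    Summable fun k : ℕ => 1 / (N + k) ^ s := by
  have h0 : Summable fun k : ℕ => 1 / ((k : ℝ) + 1) ^ s := by
    have := (Real.summable_one_div_nat_rpow (p := s)).mpr hs
    have := (summable_nat_add_iff 1).mpr this
    simpa [Nat.cast_add] using this
  refine h0.of_nonneg_of_le (fun k => by positivity) (fun k => ?_)
  have hk : (0:ℝ) ≤ k := Nat.cast_nonneg k
  have h1 : ((k:ℝ) + 1) ^ s ≤ (N + k) ^ s :=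
    Real.rpow_le_rpow (by linarith) (by linarith) (by linarith)
  have h2 : (0:ℝ) < ((k:ℝ) + 1) ^ s := Real.rpow_pos_of_pos (by linarith) s
  exact one_div_le_one_div_of_le h2 h1

lemma telescope_sum (s : ℝ) (hs : 1 < s) (N : ℝ) (hN : 0 < N) :
    HasSum (fun k : ℕ => ((N + k) ^ (1 - s) - (N + (k + 1)) ^ (1 - s)) / (s - 1))
      (N ^ (1 - s) / (s - 1)) := by
  have hnn : ∀ k : ℕ, 0 ≤ ((N + k) ^ (1 - s) - (N + (k + 1)) ^ (1 - s)) / (s - 1) := by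
    intro k
    have hxk : (0:ℝ) < N + k := by
      have : (0:ℝ) ≤ k := Nat.cast_nonneg k
      linarith
    have := (mvt_bound s hs (N + k) hxk).1
    have h2 : (0:ℝ) ≤ (s - 1) * (N + k + 1) ^ (-s) :=
      mul_nonneg (by linarith) (Real.rpow_nonneg (by linarith) _)
    have : (0:ℝ) ≤ (N + k) ^ (1 - s) - (N + k + 1) ^ (1 - s) := by linarith
    have h3 : N + ((k:ℝ) + 1) = N + k + 1 := by ring
    rw [h3]
    exact div_nonneg this (by linarith)
  rw [hasSum_iff_tendsto_nat_of_nonneg hnn]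
  have hpart : ∀ m : ℕ, ∑ i ∈ Finset.range m,
      ((N + i) ^ (1 - s) - (N + (i + 1)) ^ (1 - s)) / (s - 1)
      = N ^ (1 - s) / (s - 1) - (N + m) ^ (1 - s) / (s - 1) := by
    intro m
    have := Finset.sum_range_sub' (fun k : ℕ => (N + k) ^ (1 - s) / (s - 1)) m
    simp only [Nat.cast_zero, add_zero] at this
    rw [← this]
    apply Finset.sum_congr rfl
    intro i _
    push_cast
    ring
  simp only [hpart]
  have hlim : Tendsto (fun m : ℕ => (N + m) ^ (1 - s)) atTop (nhds 0) := by
    have h1 : Tendsto (fun m : ℕ => N + (m : ℝ)) atTop atTop :=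
      tendsto_atTop_add_const_left _ N tendsto_natCast_atTop_atTop
    have h2 : Tendsto (fun x : ℝ => x ^ (-(s - 1))) atTop (nhds 0) :=
      tendsto_rpow_neg_atTop (by linarith)
    have := h2.comp h1
    simpa [Function.comp_def, show -(s - 1) = 1 - s by ring] using this
  have := (hlim.div_const (s - 1)).const_sub (N ^ (1 - s) / (s - 1))
  simpa using this

lemma tail_lower (s : ℝ) (hs : 1 < s) (N : ℝ) (hN : 1 ≤ N) :
    N ^ (1 - s) / (s - 1) ≤ ∑' k : ℕ, 1 / (N + k) ^ s := by
  have hN0 : (0:ℝ) < N := by linarith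
  have htel := telescope_sum s hs N hN0
  rw [← htel.tsum_eq]
  refine Summable.tsum_le_tsum (fun k => ?_) htel.summable (summable_shift s hs N hN)
  have hk : (0:ℝ) ≤ k := Nat.cast_nonneg k
  have hxk : (0:ℝ) < N + k := by linarith
  have h2 := (mvt_bound s hs (N + k) hxk).2
  have h3 : N + ((k:ℝ) + 1) = (N + k) + 1 := by ring
  rw [h3, div_le_iff₀ (by linarith : (0:ℝ) < s - 1)]
  rw [one_div, ← Real.rpow_neg hxk.le]
  linarith

lemma tail_upper (s : ℝ) (hs : 1 < s) (N : ℝ) (hN : 1 ≤ N) :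
    ∑' k : ℕ, 1 / (N + k) ^ s ≤ N ^ (-s) + N ^ (1 - s) / (s - 1) := by
  have hN0 : (0:ℝ) < N := by linarith
  have hsum := summable_shift s hs N hN
  rw [Summable.tsum_eq_zero_add hsum]
  have h0 : 1 / (N + (0:ℕ)) ^ s = N ^ (-s) := by
    rw [Nat.cast_zero, add_zero, one_div, ← Real.rpow_neg hN0.le]
  rw [h0]
  gcongr
  have htel := telescope_sum s hs N hN0
  rw [← htel.tsum_eq]
  refine Summable.tsum_le_tsum (fun k => ?_) ((summable_nat_add_iff 1).mpr hsum) htel.summable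
  have hk : (0:ℝ) ≤ k := Nat.cast_nonneg k
  have hxk : (0:ℝ) < N + k := by linarith
  have h1 := (mvt_bound s hs (N + k) hxk).1
  have h3 : N + ((k:ℝ) + 1) = (N + k) + 1 := by push_cast; ring
  rw [show ((k+1 : ℕ):ℝ) = (k:ℝ) + 1 by push_cast; ring, h3,
    le_div_iff₀ (by linarith : (0:ℝ) < s - 1)]
  rw [one_div, ← Real.rpow_neg (by linarith : (0:ℝ) ≤ N + k + 1)]
  linarith

theorem diff_estimate (r : ℝ) (hr : 2 < r) (n : ℕ) (hn : 0 < n) :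
    ∃ θ₂ ∈ Set.Icc (-1 : ℝ) 1,
      (1 / (n : ℝ)) * ∑' k : ℕ, 1 / ((n : ℝ) + k) ^ (r - 1) -
          ∑' k : ℕ, 1 / ((n : ℝ) + k) ^ r =
        (1 / (n : ℝ) ^ r) * ((n : ℝ) / ((r - 1) * (r - 2)) + θ₂) := by
  set N : ℝ := (n : ℝ) with hNdef
  have hN : 1 ≤ N := by rw [hNdef]; exact_mod_cast hn
  have hN0 : (0:ℝ) < N := by linarith
  set A := ∑' k : ℕ, 1 / (N + k) ^ (r - 1) with hA
  set B := ∑' k : ℕ, 1 / (N + k) ^ r with hB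
  set P := N ^ (1 - r) with hP
  set Q := N ^ (-r) with hQ
  set R := N ^ r with hR
  have hRpos : 0 < R := Real.rpow_pos_of_pos hN0 r
  have hPpos : 0 < P := Real.rpow_pos_of_pos hN0 _
  have hQpos : 0 < Q := Real.rpow_pos_of_pos hN0 _
  have hRP : R * P = N := by
    rw [hR, hP, ← Real.rpow_add hN0]
    norm_num
  have hRQ : R * Q = 1 := by
    rw [hR, hQ, ← Real.rpow_add hN0]
    norm_num
  have h2r : N ^ ((2:ℝ) - r) = N * P := by
    rw [hP, show (2:ℝ) - r = 1 + (1 - r) by ring, Real.rpow_add hN0, Real.rpow_one]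
  have hA1 : N * P / (r - 2) ≤ A := by
    have := tail_lower (r - 1) (by linarith) N hN
    rw [show (1:ℝ) - (r - 1) = 2 - r by ring, show r - 1 - 1 = r - 2 by ring, h2r] at this
    exact this
  have hA2 : A ≤ P + N * P / (r - 2) := by
    have := tail_upper (r - 1) (by linarith) N hN
    rw [show -(r - 1) = 1 - r by ring, show (1:ℝ) - (r - 1) = 2 - r by ring,
      show r - 1 - 1 = r - 2 by ring, h2r, ← hP] at this
    exact this
  have hB1 : P / (r - 1) ≤ B := by
    have := tail_lower r (by linarith) N hN
    rw [← hP] at this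
    exact this
  have hB2 : B ≤ Q + P / (r - 1) := by
    have := tail_upper r (by linarith) N hN
    rw [← hP, ← hQ] at this
    exact this
  have hr1 : (0:ℝ) < r - 1 := by linarith
  have hr2 : (0:ℝ) < r - 2 := by linarith
  have hPQ : P = Q * N := by
    rw [hP, hQ, show (1:ℝ) - r = -r + 1 by ring, Real.rpow_add hN0, Real.rpow_one]
  refine ⟨R * (A / N - B) - N / ((r - 1) * (r - 2)), ⟨?_, ?_⟩, ?_⟩
  · -- lower bound: -1 ≤ θ₂
    have h1 : (N * P / (r - 2)) / N - (Q + P / (r - 1)) ≤ A / N - B := by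
      gcongr
    have h2 : R * ((N * P / (r - 2)) / N - (Q + P / (r - 1))) ≤ R * (A / N - B) :=
      mul_le_mul_of_nonneg_left h1 hRpos.le
    have h3 : R * ((N * P / (r - 2)) / N - (Q + P / (r - 1)))
        = N / (r - 2) - 1 - N / (r - 1) := by
      have e0 : N * P / (r - 2) / N = P / (r - 2) := by
        field_simp
      rw [e0, show R * (P / (r - 2) - (Q + P / (r - 1)))
        = (R * P) / (r - 2) - R * Q - (R * P) / (r - 1) by ring, hRP, hRQ]
    have hzero : N / (r - 2) - N / (r - 1) - N / ((r - 1) * (r - 2)) = 0 := by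
      field_simp
      ring
    rw [h3] at h2
    linarith
  · -- upper bound: θ₂ ≤ 1
    have h1 : A / N - B ≤ (P + N * P / (r - 2)) / N - P / (r - 1) := by
      gcongr
    have h2 : R * (A / N - B) ≤ R * ((P + N * P / (r - 2)) / N - P / (r - 1)) :=
      mul_le_mul_of_nonneg_left h1 hRpos.le
    have h3 : R * ((P + N * P / (r - 2)) / N - P / (r - 1))
        = 1 + N / (r - 2) - N / (r - 1) := by
      have e1 : (P + N * P / (r - 2)) / N - P / (r - 1)
          = Q + Q * N / (r - 2) - Q * N / (r - 1) := by
        rw [hPQ]; field_simp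
      rw [e1, show R * (Q + Q * N / (r - 2) - Q * N / (r - 1))
        = R * Q + (R * Q) * N / (r - 2) - (R * Q) * N / (r - 1) by ring, hRQ]
      ring
    have hzero : N / (r - 2) - N / (r - 1) - N / ((r - 1) * (r - 2)) = 0 := by
      field_simp
      ring
    rw [h3] at h2
    linarith
  · -- the equation
    have hRne : R ≠ 0 := hRpos.ne'
    rw [show (1:ℝ) / N * A - B = (1 / R) * (R * (A / N - B)) by
      field_simp]
    congr 1
    ring
end

section
/- Suppose that for reals r > 2 and integer n ≥ 1 there are θ ∈ [−1, 0] and the quantity E = (1/π)( ∑_{k=n}^∞ 1/k^r + (θ/n) ∑_{k=1}^∞ k/(k+n)^r ). Then E = (1/n^r)·(n/r)·( 1/π + θ̄·( 1/(r−2) + r/n ) ) for some θ̄ ∈ (−2/π, 2/π). -/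
open Real Filter


lemma bern_neg {s p : ℝ} (hs : -1 < s) (hp : p ≤ 0) : 1 + p * s ≤ (1 + s) ^ p := by
  have h1 : (0:ℝ) < 1 + s := by linarith
  rcases le_or_gt (1 + p * s) 0 with h | h
  · exact h.trans (Real.rpow_pos_of_pos h1 p).le
  · rw [Real.rpow_def_of_pos h1, ← Real.exp_log h]
    apply Real.exp_le_exp.mpr
    have l1 : Real.log (1 + p * s) ≤ p * s := by
      have := Real.log_le_sub_one_of_pos h; linarith
    have l2 : Real.log (1 + s) ≤ s := by
      have := Real.log_le_sub_one_of_pos h1; linarith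
    nlinarith

-- (1+1/a)^(-q) expansion: key multiplicative identity
lemma rpow_shift (q a : ℝ) (ha : 0 < a) :
    (1 + 1/a) ^ (-q) * a ^ (-q) = (a+1) ^ (-q) := by
  rw [← Real.mul_rpow (by positivity) ha.le]
  congr 1; field_simp

lemma tele_le (q a : ℝ) (hq : 0 < q) (ha : 0 < a) :
    a ^ (-q) - (a+1) ^ (-q) ≤ q * (a ^ (-q) / a) := by
  have hb := bern_neg (s := 1/a) (p := -q) (by nlinarith [one_div_pos.mpr ha]) (by linarith)
  -- hb : 1 + (-q) * (1/a) ≤ (1 + 1/a) ^ (-q)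
  have hA : (0:ℝ) < a ^ (-q) := Real.rpow_pos_of_pos ha _
  have h2 : (1 + (-q) * (1/a)) * a ^ (-q) ≤ (1 + 1/a) ^ (-q) * a ^ (-q) :=
    mul_le_mul_of_nonneg_right hb hA.le
  rw [rpow_shift q a ha] at h2
  have : (1 + (-q) * (1/a)) * a ^ (-q) = a ^ (-q) - q * (a ^ (-q) / a) := by
    field_simp; ring
  linarith [this ▸ h2]

lemma tele_ge (q a : ℝ) (hq : 0 < q) (ha : 0 < a) :
    q * ((a+1) ^ (-q) / (a+1)) ≤ a ^ (-q) - (a+1) ^ (-q) := by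
  have ha1 : (0:ℝ) < a + 1 := by linarith
  have hb := bern_neg (s := -(1/(a+1))) (p := -q) (by rw [neg_lt_neg_iff]; rw [div_lt_one ha1]; linarith) (by linarith)
  -- hb : 1 + (-q) * (-(1/(a+1))) ≤ (1 - 1/(a+1)) ^ (-q)
  have he : (1 + -(1/(a+1))) = a / (a+1) := by field_simp; ring
  rw [he] at hb
  have hA : (0:ℝ) < (a+1) ^ (-q) := Real.rpow_pos_of_pos ha1 _
  have h2 : (1 + (-q) * (-(1/(a+1)))) * (a+1) ^ (-q) ≤ (a/(a+1)) ^ (-q) * (a+1) ^ (-q) :=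
    mul_le_mul_of_nonneg_right hb hA.le
  have h3 : (a/(a+1)) ^ (-q) * (a+1) ^ (-q) = a ^ (-q) := by
    rw [← Real.mul_rpow (by positivity) ha1.le]
    congr 1; field_simp
  rw [h3] at h2
  have : (1 + (-q) * (-(1/(a+1)))) * (a+1) ^ (-q)
      = (a+1) ^ (-q) + q * ((a+1) ^ (-q) / (a+1)) := by field_simp
  linarith [this ▸ h2]


lemma tele_hasSum (c q : ℝ) (hc : 0 < c) (hq : 0 < q) :
    HasSum (fun k : ℕ => (c + k) ^ (-q) - (c + k + 1) ^ (-q)) (c ^ (-q)) := by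
  have hnn : ∀ k : ℕ, (0:ℝ) ≤ (c + k) ^ (-q) - (c + k + 1) ^ (-q) := by
    intro k
    have h1 : (0:ℝ) < c + k := by positivity
    have := Real.rpow_le_rpow_of_nonpos h1 (by linarith : c + (k:ℝ) ≤ c + k + 1) (by linarith : -q ≤ 0)
    linarith
  rw [hasSum_iff_tendsto_nat_of_nonneg hnn]
  have key : ∀ N : ℕ, ∑ k ∈ Finset.range N, ((c + k) ^ (-q) - (c + k + 1) ^ (-q))
      = c ^ (-q) - (c + N) ^ (-q) := by
    intro N
    calc ∑ k ∈ Finset.range N, ((c + k) ^ (-q) - (c + k + 1) ^ (-q))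
        = ∑ k ∈ Finset.range N, ((fun j : ℕ => (c + j) ^ (-q)) k
            - (fun j : ℕ => (c + j) ^ (-q)) (k+1)) := by
          apply Finset.sum_congr rfl; intro k _; push_cast; ring_nf
      _ = (c + (0:ℕ)) ^ (-q) - (c + N) ^ (-q) :=
          Finset.sum_range_sub' (fun j : ℕ => (c + j) ^ (-q)) N
      _ = c ^ (-q) - (c + N) ^ (-q) := by norm_num
  simp only [key]
  have h0 : Tendsto (fun N : ℕ => (c + N) ^ (-q)) atTop (nhds 0) := by
    apply (tendsto_rpow_neg_atTop hq).comp
    apply tendsto_atTop_add_const_left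
    exact tendsto_natCast_atTop_atTop
  have := (tendsto_const_nhds (x := c ^ (-q)) (f := atTop (α := ℕ))).sub h0
  simpa using this

lemma summable_shift_s14 (c r : ℝ) (hc : 1 ≤ c) (hr : 1 < r) :
    Summable (fun k : ℕ => (c + k) ^ (-r)) := by
  have h := (Real.summable_nat_rpow (p := -r)).mpr (by linarith)
  have h1 : Summable (fun k : ℕ => ((k+1 : ℕ):ℝ) ^ (-r)) :=
    (summable_nat_add_iff 1).mpr h
  refine Summable.of_nonneg_of_le (fun k => (Real.rpow_pos_of_pos (by positivity) _).le)
    (fun k => ?_) h1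
  apply Real.rpow_le_rpow_of_nonpos (by positivity) ?_ (by linarith)
  push_cast; linarith

lemma rpow_split (x q : ℝ) (hx : 0 < x) : x ^ (-(q+1)) = x ^ (-q) / x := by
  rw [show -(q+1) = -q - 1 by ring, Real.rpow_sub hx, Real.rpow_one]

lemma head_le (c q : ℝ) (hc : 1 ≤ c) (hq : 0 < q) :
    c ^ (-q) / q ≤ ∑' k : ℕ, (c + k) ^ (-(q+1)) := by
  have hsum : Summable (fun k : ℕ => (c + k) ^ (-(q+1))) :=
    summable_shift_s14 c (q+1) hc (by linarith)
  have htele := (tele_hasSum c q (by linarith) hq).div_const q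
  refine hasSum_le (fun k => ?_) htele hsum.hasSum
  have ha : (0:ℝ) < c + k := by positivity
  have := tele_le q (c + k) hq ha
  rw [rpow_split (c + k) q ha]
  rw [div_le_iff₀ hq]
  linarith

lemma tail_le (c q : ℝ) (hc : 1 ≤ c) (hq : 0 < q) :
    ∑' k : ℕ, (c + k + 1) ^ (-(q+1)) ≤ c ^ (-q) / q := by
  have hsum : Summable (fun k : ℕ => (c + k + 1) ^ (-(q+1))) := by
    have := summable_shift_s14 (c+1) (q+1) (by linarith) (by linarith)
    exact this.congr (fun k => by ring_nf)
  have htele := (tele_hasSum c q (by linarith) hq).div_const q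
  refine hasSum_le (fun k => ?_) hsum.hasSum htele
  have ha : (0:ℝ) < c + k := by positivity
  have := tele_ge q (c + k) hq ha
  rw [rpow_split (c + k + 1) q (by positivity)]
  rw [le_div_iff₀ hq]
  nlinarith [this]

set_option maxHeartbeats 1000000 in
theorem main_reduction (r θ E : ℝ) (hr : 2 < r) (hθ : θ ∈ Set.Icc (-1 : ℝ) 0)
    (n : ℕ) (hn : 0 < n)
    (hE : E = (1 / Real.pi) * ((∑' k : ℕ, 1 / ((n : ℝ) + k) ^ r) +
      (θ / n) * ∑' k : ℕ, ((k : ℝ) + 1) / (((k : ℝ) + 1 + n) ^ r))) :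
    ∃ θbar ∈ Set.Ioo (-2 / Real.pi) (2 / Real.pi),
      E = (1 / (n : ℝ) ^ r) * ((n : ℝ) / r) *
        (1 / Real.pi + θbar * (1 / (r - 2) + r / n)) := by
  obtain ⟨hθ1, hθ2⟩ := hθ
  set c : ℝ := (n : ℝ) with hcdef
  have hc1 : (1:ℝ) ≤ c := by rw [hcdef]; exact_mod_cast hn
  have hc0 : (0:ℝ) < c := by linarith
  set q1 : ℝ := r - 1 with hq1def
  set q2 : ℝ := r - 2 with hq2def
  have hq1 : (1:ℝ) < q1 := by rw [hq1def]; linarith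
  have hq1' : (0:ℝ) < q1 := by linarith
  have hq2 : (0:ℝ) < q2 := by rw [hq2def]; linarith
  have hπ : (0:ℝ) < Real.pi := Real.pi_pos
  have hpos : ∀ k : ℕ, (0:ℝ) < c + k := fun k => by
    have : (0:ℝ) ≤ k := Nat.cast_nonneg k; linarith
  have hpos1 : ∀ k : ℕ, (0:ℝ) < c + k + 1 := fun k => by
    have := hpos k; linarith
  clear_value c q1 q2
  -- rewrite the first sum
  have hrw1 : (∑' k : ℕ, 1 / (c + k) ^ r) = ∑' k : ℕ, (c + k) ^ (-r) := by
    refine tsum_congr fun k => ?_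
    rw [Real.rpow_neg (hpos k).le, one_div]
  set S1 : ℝ := ∑' k : ℕ, (c + k) ^ (-r) with hS1def
  -- rewrite the second sum
  have hrw2 : (∑' k : ℕ, ((k : ℝ) + 1) / (((k : ℝ) + 1 + c) ^ r))
      = ∑' k : ℕ, ((c + k + 1) ^ (-q1) - c * (c + k + 1) ^ (-r)) := by
    refine tsum_congr fun k => ?_
    have hx : (0:ℝ) < c + k + 1 := hpos1 k
    have hb : ((k : ℝ) + 1 + c) = c + k + 1 := by ring
    rw [hb]
    have e1 : (c + k + 1) ^ (-q1) = (c + k + 1) * (c + k + 1) ^ (-r) := by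
      rw [show -q1 = 1 + (-r) by rw [hq1def]; ring, Real.rpow_add hx, Real.rpow_one]
    rw [e1, Real.rpow_neg hx.le]
    have hxr : (0:ℝ) < (c + k + 1) ^ r := Real.rpow_pos_of_pos hx r
    field_simp
    ring
  -- summabilities
  have hsum1 : Summable (fun k : ℕ => (c + k) ^ (-r)) :=
    summable_shift_s14 c r hc1 (by linarith)
  have hsumA : Summable (fun k : ℕ => (c + k + 1) ^ (-q1)) := by
    have := summable_shift_s14 (c+1) q1 (by linarith) hq1
    exact this.congr (fun k => by ring_nf)
  have hsumB : Summable (fun k : ℕ => (c + k + 1) ^ (-r)) := by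
    have := summable_shift_s14 (c+1) r (by linarith) (by linarith)
    exact this.congr (fun k => by ring_nf)
  set A : ℝ := ∑' k : ℕ, (c + k + 1) ^ (-q1) with hAdef
  set B : ℝ := ∑' k : ℕ, (c + k + 1) ^ (-r) with hBdef
  have hS2split : (∑' k : ℕ, ((c + k + 1) ^ (-q1) - c * (c + k + 1) ^ (-r)))
      = A - c * B := by
    rw [Summable.tsum_sub hsumA (hsumB.mul_left c), tsum_mul_left]
  rw [hrw1, hrw2, hS2split] at hE
  set S2 : ℝ := A - c * B with hS2def
  -- S2 nonneg
  have hS2nonneg : 0 ≤ S2 := by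
    rw [← hS2split]
    refine tsum_nonneg fun k => ?_
    have hx : (0:ℝ) < c + k + 1 := hpos1 k
    have e1 : (c + k + 1) ^ (-q1) = (c + k + 1) * (c + k + 1) ^ (-r) := by
      rw [show -q1 = 1 + (-r) by rw [hq1def]; ring, Real.rpow_add hx, Real.rpow_one]
    rw [e1]
    have h2 : (0:ℝ) < (c + k + 1) ^ (-r) := Real.rpow_pos_of_pos hx _
    nlinarith
  -- bounds on S1
  have hS1low : c ^ (-q1) / q1 ≤ S1 := by
    have := head_le c q1 hc1 hq1'
    have he : ∀ k : ℕ, (c + k) ^ (-(q1+1)) = (c + k) ^ (-r) := by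
      intro k; congr 1; rw [hq1def]; ring
    rwa [tsum_congr he] at this
  have hS1up : S1 ≤ c ^ (-r) + c ^ (-q1) / q1 := by
    have hsplit := Summable.tsum_eq_zero_add hsum1
    have htail : (∑' k : ℕ, (c + (k+1:ℕ)) ^ (-r)) ≤ c ^ (-q1) / q1 := by
      have := tail_le c q1 hc1 hq1'
      have he : ∀ k : ℕ, (c + (k+1:ℕ)) ^ (-r) = (c + k + 1) ^ (-(q1+1)) := by
        intro k
        rw [show -r = -(q1+1) by rw [hq1def]; ring]
        congr 1; push_cast; ring
      rwa [tsum_congr he]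
    rw [hS1def, hsplit]
    simp only [Nat.cast_zero, add_zero]
    linarith
  -- bound on A
  have hAup : A ≤ c ^ (-q2) / q2 := by
    have := tail_le c q2 hc1 hq2
    have he : ∀ k : ℕ, (c + k + 1) ^ (-(q2+1)) = (c + k + 1) ^ (-q1) := by
      intro k; congr 1; rw [hq1def, hq2def]; ring
    rwa [tsum_congr he] at this
  -- bound on B
  have hBlow : (c+1) ^ (-q1) / q1 ≤ B := by
    have := head_le (c+1) q1 (by linarith) hq1'
    have he : ∀ k : ℕ, ((c+1) + k) ^ (-(q1+1)) = (c + k + 1) ^ (-r) := by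
      intro k
      rw [show -(q1+1) = -r by rw [hq1def]; ring]
      congr 1; ring
    rwa [tsum_congr he] at this
  clear_value S1 A B S2
  -- K and rpow conversions
  set K : ℝ := c ^ q1 with hKdef
  have hK : (0:ℝ) < K := Real.rpow_pos_of_pos hc0 _
  have eK1 : c ^ (-q1) = 1 / K := by
    rw [Real.rpow_neg hc0.le, one_div]
  have eK2 : c ^ r = K * c := by
    rw [show r = q1 + 1 by rw [hq1def]; ring, Real.rpow_add hc0, Real.rpow_one]
  have eK2' : c ^ (-r) = 1 / (K * c) := by
    rw [Real.rpow_neg hc0.le, eK2, one_div]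
  have eK3 : c ^ (-q2) = c / K := by
    rw [show -q2 = 1 + (-q1) by rw [hq1def, hq2def]; ring, Real.rpow_add hc0,
      Real.rpow_one, Real.rpow_neg hc0.le]
    field_simp
    exact hKdef
  -- Bernoulli bound on (c+1)^(-q1)
  have hcp1 : (1 - q1 / c) / K ≤ (c+1) ^ (-q1) := by
    have hb := bern_neg (s := 1/c) (p := -q1) (by nlinarith [one_div_pos.mpr hc0]) (by linarith)
    have h2 := mul_le_mul_of_nonneg_right hb (Real.rpow_pos_of_pos hc0 (-q1)).le
    rw [rpow_shift q1 c hc0] at h2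
    calc (1 - q1 / c) / K = (1 + (-q1) * (1/c)) * c ^ (-q1) := by
          rw [eK1]; field_simp; ring
      _ ≤ (c+1) ^ (-q1) := h2
  clear_value K
  -- abbreviations u, v
  set u : ℝ := K * S1 with hudef
  set v : ℝ := K * S2 with hvdef
  clear_value u v
  have hu1 : 1 / q1 ≤ u := by
    have := mul_le_mul_of_nonneg_left hS1low hK.le
    rw [eK1, ← hudef] at this
    calc (1:ℝ) / q1 = K * (1 / K / q1) := by field_simp
      _ ≤ u := this
  have hu2 : u ≤ 1 / c + 1 / q1 := by
    have := mul_le_mul_of_nonneg_left hS1up hK.le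
    rw [eK2', eK1, ← hudef] at this
    calc u ≤ K * (1 / (K * c) + 1 / K / q1) := this
      _ = 1 / c + 1 / q1 := by field_simp
  have hv1 : 0 ≤ v := hvdef ▸ mul_nonneg hK.le hS2nonneg
  have hv2 : v ≤ c / q2 - (c - q1) / q1 := by
    have hB2 : (1 - q1 / c) / K / q1 ≤ B :=
      le_trans (by gcongr) hBlow
    have h6 : c * ((1 - q1 / c) / K / q1) ≤ c * B :=
      mul_le_mul_of_nonneg_left hB2 hc0.le
    rw [eK3] at hAup
    have hS2' : S2 ≤ c / K / q2 - c * ((1 - q1 / c) / K / q1) := by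
      rw [hS2def]; linarith
    have h7 := mul_le_mul_of_nonneg_left hS2' hK.le
    rw [← hvdef] at h7
    calc v ≤ K * (c / K / q2 - c * ((1 - q1 / c) / K / q1)) := h7
      _ = c / q2 - (c - q1) / q1 := by
          field_simp [hK.ne', hq2.ne', hq1'.ne', hc0.ne']
  -- θ v bounds
  have hθv1 : -v ≤ θ * v := by nlinarith
  have hθv2 : θ * v ≤ 0 := mul_nonpos_of_nonpos_of_nonneg hθ2 hv1
  -- the quantity T
  set X : ℝ := S1 + θ / c * S2 with hXdef
  set T : ℝ := X * r * K - 1 with hTdef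
  clear_value X T
  have hTeq : T = r * u + r * (θ * v) / c - 1 := by
    rw [hTdef, hXdef, hudef, hvdef]; field_simp
  set D : ℝ := 1 / q2 + r / c with hDdef
  clear_value D
  have hrpos : (0:ℝ) < r := by linarith
  have hD : 0 < D := by
    rw [hDdef]
    exact add_pos (one_div_pos.mpr hq2) (div_pos hrpos hc0)
  -- upper bound T < 2D
  have hTup : T < 2 * D := by
    have h1 : T ≤ r * u - 1 := by
      rw [hTeq]
      have h0 : r * (θ * v) / c ≤ 0 := by
        apply div_nonpos_of_nonpos_of_nonneg ?_ hc0.le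
        have h00 := mul_le_mul_of_nonneg_left hθv2 hrpos.le
        simpa using h00
      linarith
    have h2 : r * u ≤ r / c + r / q1 := by
      have := mul_le_mul_of_nonneg_left hu2 hrpos.le
      calc r * u ≤ r * (1/c + 1/q1) := this
        _ = r / c + r / q1 := by ring
    have h3 : r / q1 = 1 + 1 / q1 := by
      field_simp
      rw [hq1def]; ring
    have h4 : 1 / q1 < 2 * (1 / q2) := by
      rw [mul_one_div, div_lt_div_iff₀ hq1' hq2]; linarith
    have h5 : r / c < 2 * (r / c) := by
      have : 0 < r / c := div_pos hrpos hc0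
      linarith
    rw [hDdef]; linarith
  -- lower bound -2D < T
  have hTlow : -(2 * D) < T := by
    have e1 : r * (θ * v) / c = (r / c) * (θ * v) := by ring
    have e2 : r * v / c = (r / c) * v := by ring
    have h1 : r * u - r * v / c - 1 ≤ T := by
      rw [hTeq, e1]
      have := mul_le_mul_of_nonneg_left hθv1 (div_pos hrpos hc0).le
      rw [e2]; linarith [this]
    have h2 : r / q1 ≤ r * u := by
      have := mul_le_mul_of_nonneg_left hu1 hrpos.le
      calc r / q1 = r * (1 / q1) := by ring
        _ ≤ r * u := this
    have h3 : r * v / c ≤ r * (c / q2 - (c - q1) / q1) / c := by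
      rw [e2, show r * (c / q2 - (c - q1) / q1) / c = (r / c) * (c / q2 - (c - q1) / q1) by ring]
      exact mul_le_mul_of_nonneg_left hv2 (div_pos hrpos hc0).le
    have h4 : 0 < (r / q1 - r * (c / q2 - (c - q1) / q1) / c - 1) + 2 * D := by
      have e : (r / q1 - r * (c / q2 - (c - q1) / q1) / c - 1) + 2 * D
          = 2 / q1 + r / c := by
        rw [hDdef, hq1def, hq2def]
        have n1 : r - 1 ≠ 0 := by linarith
        have n2 : r - 2 ≠ 0 := by linarith
        have n3 : c ≠ 0 := hc0.ne'
        field_simp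
        ring
      rw [e]
      exact add_pos (div_pos two_pos hq1') (div_pos hrpos hc0)
    linarith
  -- assemble
  refine ⟨T / (Real.pi * D), ⟨?_, ?_⟩, ?_⟩
  · rw [div_lt_div_iff₀ hπ (mul_pos hπ hD)]
    have h := mul_lt_mul_of_pos_right hTlow hπ
    linarith [h]
  · rw [div_lt_div_iff₀ (mul_pos hπ hD) hπ]
    have h := mul_lt_mul_of_pos_right hTup hπ
    linarith [h]
  · rw [hE, eK2, hTdef]
    have hDne : D ≠ 0 := hD.ne'
    field_simp
    ring
end
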